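/- Let (K,d) be a finite metric space of size K, and suppose a classifier h maps inputs to probability vectors on K with expected Wasserstein-1 risk E[W_1(h(x), e_{κ(x)})] ≤ ε, where the label is one-hot. Then the expected semantic distance of the argmax prediction satisfies E[d(κ̂(x), κ(x))] ≤ K ε, where κ̂(x) = argmax_κ h(κ|x). -/
import Mathlib


open scoped BigOperators
open MeasureTheory

/-- If a classifier `h` into probability vectors on a finite metric
space of size `K` has expected Wasserstein-1 risk at most `ε` against one-hot labels,
then the expected semantic distance of its argmax prediction is at most `K ε`. -/
theorem expected_semantic_distance_le {X : Type*} [MeasurableSpace X]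
    {α : Type*} [Fintype α] [MetricSpace α] [MeasurableSpace α]
    {K : ℕ} (hcard : Fintype.card α = K) (hK : 0 < K)
    (P : Measure (X × α)) [IsProbabilityMeasure P]
    (h : X → α → ℝ)
    (hprob : ∀ x, (∀ κ', 0 ≤ h x κ') ∧ ∑ κ', h x κ' = 1)
    (κhat : X → α) (hargmax : ∀ x κ', h x κ' ≤ h x (κhat x))
    (ε : ℝ)
    (hWint : Integrable (fun p : X × α => ∑ κ' : α, dist κ' p.2 * h p.1 κ') P)
    (hdint : Integrable (fun p : X × α => dist (κhat p.1) p.2) P)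
    (hrisk : ∫ p : X × α, (∑ κ' : α, dist κ' p.2 * h p.1 κ') ∂P ≤ ε) :
    ∫ p : X × α, dist (κhat p.1) p.2 ∂P ≤ (K : ℝ) * ε := by
  have hKpos : (0 : ℝ) < K := by exact_mod_cast hK
  -- pointwise bound
  have hpt : ∀ p : X × α,
      dist (κhat p.1) p.2 ≤ (K : ℝ) * ∑ κ' : α, dist κ' p.2 * h p.1 κ' := by
    intro ⟨x, κ⟩
    have hmax : (1 : ℝ) / K ≤ h x (κhat x) := by
      have h1 : (1 : ℝ) = ∑ κ', h x κ' := (hprob x).2.symm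
      have hle : ∑ κ' : α, h x κ' ≤ ∑ _κ' : α, h x (κhat x) :=
        Finset.sum_le_sum fun i _ => hargmax x i
      have : (1 : ℝ) ≤ (K : ℝ) * h x (κhat x) := by
        rw [h1]
        simpa [Finset.sum_const, hcard, Finset.card_univ, mul_comm] using hle
      rw [div_le_iff₀ hKpos]
      linarith [this]
    have hterm : dist (κhat x) κ * h x (κhat x) ≤ ∑ κ' : α, dist κ' κ * h x κ' :=
      Finset.single_le_sum (f := fun κ' => dist κ' κ * h x κ')
        (fun i _ => mul_nonneg dist_nonneg ((hprob x).1 i)) (Finset.mem_univ _)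
    have h2 : dist (κhat x) κ * (1 / K) ≤ dist (κhat x) κ * h x (κhat x) :=
      mul_le_mul_of_nonneg_left hmax dist_nonneg
    have h3 : dist (κhat x) κ * (1 / K) ≤ ∑ κ' : α, dist κ' κ * h x κ' := le_trans h2 hterm
    calc dist (κhat x) κ = (K : ℝ) * (dist (κhat x) κ * (1 / K)) := by
          field_simp
      _ ≤ (K : ℝ) * ∑ κ' : α, dist κ' κ * h x κ' :=
          mul_le_mul_of_nonneg_left h3 (le_of_lt hKpos)
  calc ∫ p : X × α, dist (κhat p.1) p.2 ∂P
      ≤ ∫ p : X × α, (K : ℝ) * ∑ κ' : α, dist κ' p.2 * h p.1 κ' ∂P :=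
        integral_mono hdint (hWint.const_mul _) hpt
    _ = (K : ℝ) * ∫ p : X × α, ∑ κ' : α, dist κ' p.2 * h p.1 κ' ∂P :=
        integral_const_mul _ _
    _ ≤ (K : ℝ) * ε := mul_le_mul_of_nonneg_left hrisk (le_of_lt hKpos)
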